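/- (Corollary 1.) In the extended bidirectional structural model with direct instrument effect η of Z on Y° and δ = 0, under Assumption 1 (confounders independent with equal variance σ² > 0), suppose βxy·βyx ≠ 1, μxz ≠ 0, μyw ≠ 0, μxz + βyx·η ≠ 0 and βxy·μxz + η ≠ 0. Define c = 1/(1 − βxy·βyx), λ1 = σ²c²(1 + βyx²), λ2 = σ²c²(1 + βxy²), ξxz = c(μxz + βyx·η)/√λ1, ξxw = c·βyx·μyw/√λ1, ξyz = c(βxy·μxz + η)/√λ2, ξyw = c·μyw/√λ2, η0 = η/μxz, t1 = ξxw/ξxz, t2 = ξyz/ξyw, t3 = ξxz/ξyz, t4 = ξxw/ξyw, s1 = η0²(t1t2 − 1)² − t1t2t3t4 + 1, s2 = 2t1t2η0(t1t2 − 1), s3 = t1t2(t1t2 − t3t4). Then: (i) s1·βyx² + s2·βyx + s3 = 0; (ii) βyx has the same sign as t4 (both zero simultaneously); and (iii) if βyx ≠ 0 then βxy = η0(t1t2 − 1) + t1t2/βyx. -/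

import Mathlib

set_option maxHeartbeats 1000000


/-- Corollary 1: sensitivity analysis when the instrument `Z`
has a direct effect `η` on `Y°` and `W` is valid (`δ = 0`), under Assumption 1. -/
theorem stmt_14 (μx0 μy0 μxz μyw η βxy βyx σ : ℝ)
    (hσ : 0 < σ) (hβ : βxy * βyx ≠ 1)
    (hμxz : μxz ≠ 0) (hμyw : μyw ≠ 0)
    (hxz : μxz + βyx * η ≠ 0) (hyz : βxy * μxz + η ≠ 0)
    (c lam1 lam2 ξxz ξxw ξyz ξyw η0 t1 t2 t3 t4 s1 s2 s3 : ℝ)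
    (hc : c = 1 / (1 - βxy * βyx))
    (hlam1 : lam1 = σ ^ 2 * c ^ 2 * (1 + βyx ^ 2))
    (hlam2 : lam2 = σ ^ 2 * c ^ 2 * (1 + βxy ^ 2))
    (hξxz : ξxz = c * (μxz + βyx * η) / Real.sqrt lam1)
    (hξxw : ξxw = c * βyx * μyw / Real.sqrt lam1)
    (hξyz : ξyz = c * (βxy * μxz + η) / Real.sqrt lam2)
    (hξyw : ξyw = c * μyw / Real.sqrt lam2)
    (hη0 : η0 = η / μxz)
    (ht1 : t1 = ξxw / ξxz) (ht2 : t2 = ξyz / ξyw)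
    (ht3 : t3 = ξxz / ξyz) (ht4 : t4 = ξxw / ξyw)
    (hs1 : s1 = η0 ^ 2 * (t1 * t2 - 1) ^ 2 - t1 * t2 * t3 * t4 + 1)
    (hs2 : s2 = 2 * t1 * t2 * η0 * (t1 * t2 - 1))
    (hs3 : s3 = t1 * t2 * (t1 * t2 - t3 * t4)) :
    s1 * βyx ^ 2 + s2 * βyx + s3 = 0 ∧
    Real.sign βyx = Real.sign t4 ∧ (βyx = 0 ↔ t4 = 0) ∧
    (βyx ≠ 0 → βxy = η0 * (t1 * t2 - 1) + t1 * t2 / βyx) := by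
  have h1 : (1 : ℝ) - βxy * βyx ≠ 0 := sub_ne_zero.mpr (Ne.symm hβ)
  have hcne : c ≠ 0 := by rw [hc]; exact one_div_ne_zero h1
  have hl1 : 0 < lam1 := by
    rw [hlam1]; positivity
  have hl2 : 0 < lam2 := by
    rw [hlam2]; positivity
  have ha : 0 < Real.sqrt lam1 := Real.sqrt_pos.mpr hl1
  have hb : 0 < Real.sqrt lam2 := Real.sqrt_pos.mpr hl2
  set a := Real.sqrt lam1 with haDef
  set b := Real.sqrt lam2 with hbDef
  have ha2 : a ^ 2 = lam1 := Real.sq_sqrt hl1.le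
  have hb2 : b ^ 2 = lam2 := Real.sq_sqrt hl2.le
  have hane : a ≠ 0 := ha.ne'
  have hbne : b ≠ 0 := hb.ne'
  -- closed forms
  have hT1 : t1 = βyx * μyw / (μxz + βyx * η) := by
    rw [ht1, hξxw, hξxz]
    field_simp
  have hT2 : t2 = (βxy * μxz + η) / μyw := by
    rw [ht2, hξyz, hξyw]
    field_simp
  have hT4 : t4 = βyx * (b / a) := by
    rw [ht4, hξxw, hξyw]
    field_simp
  have hT3 : t3 = (μxz + βyx * η) / (βxy * μxz + η) * (b / a) := by
    rw [ht3, hξxz, hξyz]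
    field_simp
  have hT34 : t3 * t4 = βyx * (μxz + βyx * η) / (βxy * μxz + η) * (lam2 / lam1) := by
    rw [hT3, hT4, ← ha2, ← hb2]
    field_simp
  have hL : lam2 / lam1 = (1 + βxy ^ 2) / (1 + βyx ^ 2) := by
    rw [hlam1, hlam2]
    have hs2 : (σ : ℝ) ^ 2 ≠ 0 := by positivity
    have hc2 : c ^ 2 ≠ 0 := pow_ne_zero 2 hcne
    field_simp
  have hden1 : (1 : ℝ) + βyx ^ 2 ≠ 0 := by positivity
  have hden2 : (1 : ℝ) + βxy ^ 2 ≠ 0 := by positivity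
  have hK : t3 * t4 = βyx * (μxz + βyx * η) * (1 + βxy ^ 2) /
      ((βxy * μxz + η) * (1 + βyx ^ 2)) := by
    rw [hT34, hL]
    field_simp
  have hs1' : s1 = η0 ^ 2 * (t1 * t2 - 1) ^ 2 - t1 * t2 * (t3 * t4) + 1 := by
    rw [hs1]; ring
  refine ⟨?_, ?_, ?_, ?_⟩
  · have hxz' : μxz + η * βyx ≠ 0 := by rwa [mul_comm η]
    have hyz' : μxz * βxy + η ≠ 0 := by rwa [mul_comm μxz]
    rw [hs1', hs2, hs3, hK, hT1, hT2, hη0]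
    field_simp
    ring
  · rw [hT4]
    have hba : 0 < b / a := div_pos hb ha
    rcases lt_trichotomy βyx 0 with h | h | h
    · rw [Real.sign_of_neg h, Real.sign_of_neg (by nlinarith : βyx * (b / a) < 0)]
    · rw [h, zero_mul, Real.sign_zero]
    · rw [Real.sign_of_pos h, Real.sign_of_pos (by positivity : 0 < βyx * (b / a))]
  · rw [hT4]
    constructor
    · intro h; rw [h, zero_mul]
    · intro h
      rcases mul_eq_zero.mp h with h' | h'
      · exact h'
      · exact absurd h' (div_ne_zero hbne hane)
  · intro hbyx
    have hxz' : μxz + η * βyx ≠ 0 := by rwa [mul_comm η]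
    rw [hT1, hT2, hη0]
    field_simp
    ring
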